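/- arXiv:math/0308227 — 3 statements merged into one kernel-verified Lean document; each statement's English description precedes it below -/
import Mathlib

section
/- Define the partial derivative of Hⁱʲ = (1/A)gⁱʲ + (c/(A(A²-2ct)))g⁰ⁱg⁰ʲ with respect to pₖ (with gⁱʲ constant). Then ∂Hⁱʲ/∂pₖ = (c/(A(A²-2ct)))(gᵏⁱg⁰ʲ + gᵏʲg⁰ⁱ) + (2c²/(A(A²-2ct)²))g⁰ᵏg⁰ⁱg⁰ʲ, and in particular the combination Qⁱʲₕ = (1/2)Gₕₖ(∂ₚᵢHʲᵏ + ∂ₚⱼHⁱᵏ - ∂ₚₖHⁱʲ) evaluated with Gₕₖ = A gₕₖ - (c/A)pₕpₖ equals (c/A)·pₕ·Hⁱʲ... i.e., Qⁱʲₕ = (c/A)Hⁱʲpₕ. -/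
open Matrix

/-- the partial derivatives of `Hⁱʲ(p)` in `pₖ` are given by the
stated formula, and the Christoffel-type combination `Qⁱʲₕ` equals
`(c/A) Hⁱʲ pₕ`. -/
theorem stmt11 {n : ℕ} (g : Matrix (Fin n) (Fin n) ℝ) (hg : g.PosDef)
    (A c : ℝ) (hA : A > 0)
    (g0 : (Fin n → ℝ) → Fin n → ℝ)
    (hg0 : ∀ q i, g0 q i = ∑ h, q h * g⁻¹ h i)
    (t : (Fin n → ℝ) → ℝ)
    (ht : ∀ q, t q = (1 / 2) * ∑ i, ∑ k, g⁻¹ i k * q i * q k)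
    (Hfun : (Fin n → ℝ) → Fin n → Fin n → ℝ)
    (hHfun : ∀ q i j, Hfun q i j = (1 / A) * g⁻¹ i j +
      (c / (A * (A ^ 2 - 2 * c * t q))) * g0 q i * g0 q j)
    (p : Fin n → ℝ) (hp : A ^ 2 - 2 * c * t p > 0)
    (dH : Fin n → Fin n → Fin n → ℝ)
    (hdH : ∀ k i j, dH k i j =
      fderiv ℝ (fun q => Hfun q i j) p (Pi.single k 1))
    (Q : Fin n → Fin n → Fin n → ℝ)
    (hQ : ∀ i j h, Q i j h = (1 / 2) * ∑ k,
      (A * g h k - (c / A) * p h * p k) * (dH i j k + dH j i k - dH k i j)) :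
    (∀ k i j, dH k i j =
        (c / (A * (A ^ 2 - 2 * c * t p))) *
          (g⁻¹ k i * g0 p j + g⁻¹ k j * g0 p i) +
        (2 * c ^ 2 / (A * (A ^ 2 - 2 * c * t p) ^ 2)) *
          g0 p k * g0 p i * g0 p j) ∧
    (∀ i j h, Q i j h = (c / A) * Hfun p i j * p h) := by
  have hA0 : A ≠ 0 := ne_of_gt hA
  have hs0 : A ^ 2 - 2 * c * t p ≠ 0 := ne_of_gt hp
  have hsym : ∀ a b, g⁻¹ a b = g⁻¹ b a := by
    intro a b
    have h1 : (g⁻¹).IsHermitian := hg.isHermitian.inv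
    simpa using (h1.apply a b).symm
  have hdet : IsUnit g.det := hg.det_pos.ne'.isUnit
  have hgg : g * g⁻¹ = 1 := Matrix.mul_nonsing_inv g hdet
  -- the derivative of `t`
  have ht' : HasFDerivAt t
      (∑ a : Fin n, (g0 p a) • (ContinuousLinearMap.proj a : (Fin n → ℝ) →L[ℝ] ℝ)) p := by
    have heq : t = fun q => (1/2 : ℝ) * ∑ a, ∑ b, g⁻¹ a b * q a * q b := funext fun q => ht q
    rw [heq]
    have httmp := HasFDerivAt.const_mul (HasFDerivAt.fun_sum (fun (a : Fin n) (_ : a ∈ Finset.univ) =>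
        HasFDerivAt.fun_sum (fun (b : Fin n) (_ : b ∈ Finset.univ) =>
          ((hasFDerivAt_apply (𝕜 := ℝ) a p).const_mul (g⁻¹ a b)).mul
            (hasFDerivAt_apply (𝕜 := ℝ) b p)))) (1/2 : ℝ)
    simp only [Pi.mul_apply] at httmp
    refine httmp.congr_fderiv ?_
    symm
    refine ContinuousLinearMap.ext fun v => ?_
    simp only [ContinuousLinearMap.sum_apply, ContinuousLinearMap.smul_apply,
      ContinuousLinearMap.add_apply, ContinuousLinearMap.proj_apply, smul_eq_mul, hg0]
    have e1 : ∑ a : Fin n, ∑ b : Fin n, g⁻¹ a b * p a * v b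
        = ∑ a : Fin n, (∑ h, p h * g⁻¹ h a) * v a := by
      rw [Finset.sum_comm]
      refine Finset.sum_congr rfl fun b _ => ?_
      rw [Finset.sum_mul]
      refine Finset.sum_congr rfl fun a _ => by ring
    have e2 : ∑ a : Fin n, ∑ b : Fin n, p b * (g⁻¹ a b * v a)
        = ∑ a : Fin n, (∑ h, p h * g⁻¹ h a) * v a := by
      refine Finset.sum_congr rfl fun a _ => ?_
      rw [Finset.sum_mul]
      refine Finset.sum_congr rfl fun b _ => by rw [hsym a b]; ring
    have e3 : ∑ a : Fin n, ∑ b : Fin n, (g⁻¹ a b * p a * v b + p b * (g⁻¹ a b * v a))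
        = (∑ a : Fin n, ∑ b : Fin n, g⁻¹ a b * p a * v b)
          + ∑ a : Fin n, ∑ b : Fin n, p b * (g⁻¹ a b * v a) := by
      rw [← Finset.sum_add_distrib]
      exact Finset.sum_congr rfl fun a _ => by rw [← Finset.sum_add_distrib]
    rw [e3, e1, e2] at *
    linarith
  -- part 1
  have part1 : ∀ k i j, dH k i j =
      (c / (A * (A ^ 2 - 2 * c * t p))) * (g⁻¹ k i * g0 p j + g⁻¹ k j * g0 p i) +
      (2 * c ^ 2 / (A * (A ^ 2 - 2 * c * t p) ^ 2)) * g0 p k * g0 p i * g0 p j := by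
    intro k i j
    rw [hdH k i j]
    have hb : ∀ m : Fin n, HasFDerivAt (fun q : Fin n → ℝ => g0 q m)
        (∑ h : Fin n, (g⁻¹ h m) • (ContinuousLinearMap.proj h : (Fin n → ℝ) →L[ℝ] ℝ)) p := by
      intro m
      have heq : (fun q : Fin n → ℝ => g0 q m) = fun q => ∑ h, q h * g⁻¹ h m :=
        funext fun q => hg0 q m
      rw [heq]
      exact HasFDerivAt.fun_sum fun h _ => (hasFDerivAt_apply (𝕜 := ℝ) h p).mul_const (g⁻¹ h m)
    have hden := ((ht'.const_mul (2*c)).const_sub (A^2)).const_mul A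
    have heq : (fun q => Hfun q i j)
        = fun q => (1/A) * g⁻¹ i j + c * (A * (A^2 - 2*c*t q))⁻¹ * g0 q i * g0 q j := by
      funext q; rw [hHfun q i j]; ring
    rw [heq]
    obtain ⟨D, hD, hDval⟩ : ∃ D : (Fin n → ℝ) →L[ℝ] ℝ,
        HasFDerivAt (fun q => (1/A) * g⁻¹ i j + c * (A * (A^2 - 2*c*t q))⁻¹ * g0 q i * g0 q j)
          D p ∧
        D (Pi.single k 1) =
          (c / (A * (A ^ 2 - 2 * c * t p))) * (g⁻¹ k i * g0 p j + g⁻¹ k j * g0 p i) +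
          (2 * c ^ 2 / (A * (A ^ 2 - 2 * c * t p) ^ 2)) * g0 p k * g0 p i * g0 p j := by
      refine ⟨?D, ?hder, ?hval⟩
      case hder =>
        exact ((((hasFDerivAt_inv' (𝕜 := ℝ) (mul_ne_zero hA0 hs0)).comp p hden).const_mul
          c).mul (hb i)).mul (hb j) |>.const_add ((1/A) * g⁻¹ i j)
      case hval =>
        simp only [ContinuousLinearMap.add_apply, ContinuousLinearMap.smul_apply,
          ContinuousLinearMap.sum_apply, ContinuousLinearMap.comp_apply,
          ContinuousLinearMap.neg_apply, ContinuousLinearMap.proj_apply,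
          ContinuousLinearMap.mulLeftRight_apply, smul_eq_mul, Pi.single_apply,
          mul_ite, mul_zero, mul_one, Finset.sum_ite_eq', Finset.mem_univ, if_true,
          Pi.mul_apply, Function.comp_apply]
        field_simp
        ring
    rw [hD.fderiv, hDval]
  refine ⟨part1, ?_⟩
  -- part 2
  have S1 : ∀ h : Fin n, ∑ k, g h k * g0 p k = p h := by
    intro h
    calc ∑ k, g h k * g0 p k = ∑ k, ∑ m, p m * (g h k * g⁻¹ k m) := by
          refine Finset.sum_congr rfl fun k _ => ?_
          rw [hg0, Finset.mul_sum]
          refine Finset.sum_congr rfl fun m _ => by rw [hsym m k]; ring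
      _ = ∑ m, p m * ∑ k, g h k * g⁻¹ k m := by
          rw [Finset.sum_comm]
          exact Finset.sum_congr rfl fun m _ => by rw [Finset.mul_sum]
      _ = ∑ m, p m * (g * g⁻¹) h m := by simp [Matrix.mul_apply]
      _ = p h := by rw [hgg]; simp [Matrix.one_apply]
  have S2 : ∑ k, p k * g0 p k = 2 * t p := by
    rw [ht]
    calc ∑ k, p k * g0 p k = ∑ k, ∑ m, g⁻¹ m k * p m * p k := by
          refine Finset.sum_congr rfl fun k _ => ?_
          rw [hg0, Finset.mul_sum]
          refine Finset.sum_congr rfl fun m _ => by ring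
      _ = ∑ m, ∑ k, g⁻¹ m k * p m * p k := Finset.sum_comm
      _ = 2 * ((1/2) * ∑ i, ∑ k, g⁻¹ i k * p i * p k) := by ring
  intro i j h
  rw [hQ]
  set s := A ^ 2 - 2 * c * t p with hsdef
  set C := 2 * (c / (A * s)) * g⁻¹ i j + (2 * c ^ 2 / (A * s ^ 2)) * g0 p i * g0 p j with hC
  have hcombo : ∀ k, dH i j k + dH j i k - dH k i j = C * g0 p k := by
    intro k
    rw [part1 i j k, part1 j i k, part1 k i j, hC]
    rw [hsym i k, hsym j k, hsym j i]
    ring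
  have hsum : ∀ k : Fin n, (A * g h k - (c / A) * p h * p k) * (dH i j k + dH j i k - dH k i j)
      = (C * A) * (g h k * g0 p k) - (C * ((c / A) * p h)) * (p k * g0 p k) := by
    intro k; rw [hcombo k]; ring
  calc (1/2 : ℝ) * ∑ k, (A * g h k - (c / A) * p h * p k) * (dH i j k + dH j i k - dH k i j)
      = (1/2 : ℝ) * ∑ k, ((C * A) * (g h k * g0 p k) - (C * ((c / A) * p h)) * (p k * g0 p k)) :=
        by rw [Finset.sum_congr rfl fun k _ => hsum k]
    _ = (1/2 : ℝ) * ((C * A) * (∑ k, g h k * g0 p k)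
          - (C * ((c / A) * p h)) * ∑ k, p k * g0 p k) := by
        rw [Finset.sum_sub_distrib, Finset.mul_sum, Finset.mul_sum]
    _ = (1/2 : ℝ) * ((C * A) * p h - (C * ((c / A) * p h)) * (2 * t p)) := by rw [S1 h, S2]
    _ = (c / A) * Hfun p i j * p h := by
        rw [hHfun, hC]
        generalize g⁻¹ i j = gij
        rcases eq_or_ne c 0 with hc | hc
        · rw [hc]; ring
        · have htp : t p = (A ^ 2 - s) / (2 * c) := by
            rw [hsdef]; field_simp; ring
          rw [htp]
          field_simp
          linear_combination (-(s * c * g0 p i * g0 p j * p h)) * mul_inv_cancel₀ hs0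
end

section
/- Let K be the algebraic curvature operator on W = ℝⁿ × ℝⁿ defined blockwise (as in equation (17) of the paper) by K(δᵢ,δⱼ)δₖ = (c/A)(δʰᵢGⱼₖ - δʰⱼGᵢₖ)δₕ, K(∂ᵢ,∂ʲ)∂ᵏ = (c/A)(δⁱₕHʲᵏ - δʲₕHⁱᵏ)∂ₕ, K(∂ⁱ,δⱼ)δₖ = (c/A)δⁱⱼGₕₖ∂ₕ, K(∂ⁱ,δⱼ)∂ᵏ = -(c/A)δⁱⱼHʰᵏδₕ, etc. Then the Ricci tensor Ric(Y,Z) = trace(X ↦ K(X,Y)Z) satisfies Ric = (cn/A)·G, where G is the block-diagonal metric with blocks (Gᵢⱼ) and (Hⁱʲ). -/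
open Matrix

lemma trace_prod_aux {n : ℕ}
    (T : ((Fin n → ℝ) × (Fin n → ℝ)) →ₗ[ℝ] ((Fin n → ℝ) × (Fin n → ℝ))) :
    LinearMap.trace ℝ _ T =
      (∑ i, (T (Pi.single i 1, 0)).1 i) + ∑ i, (T (0, Pi.single i 1)).2 i := by
  classical
  let b := (Pi.basisFun ℝ (Fin n)).prod (Pi.basisFun ℝ (Fin n))
  rw [LinearMap.trace_eq_matrix_trace ℝ b, Matrix.trace]
  simp only [Matrix.diag, LinearMap.toMatrix_apply, Fintype.sum_sum_type]
  congr 1 <;> refine Finset.sum_congr rfl fun i _ => ?_ <;>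
    simp [b, Module.Basis.prod_repr_inl, Module.Basis.prod_repr_inr, Module.Basis.prod_apply_inl_fst,
      Module.Basis.prod_apply_inl_snd, Module.Basis.prod_apply_inr_fst, Module.Basis.prod_apply_inr_snd,
      Pi.basisFun_apply, Pi.basisFun_repr]

/-- for the algebraic curvature operator `K` of equation (17),
the Ricci tensor `Ric(Y,Z) = trace (X ↦ K(X,Y)Z)` equals `(cn/A)·G`. -/
theorem stmt12 {n : ℕ} (Gm : Matrix (Fin n) (Fin n) ℝ) (hGm : Gm.PosDef)
    (Hm : Matrix (Fin n) (Fin n) ℝ) (hHm : Hm = Gm⁻¹)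
    (c A : ℝ) (hA : A > 0)
    (del par : Fin n → (Fin n → ℝ) × (Fin n → ℝ))
    (hdel : ∀ i, del i = (Pi.single i 1, 0))
    (hpar : ∀ i, par i = (0, Pi.single i 1))
    (K : ((Fin n → ℝ) × (Fin n → ℝ)) →ₗ[ℝ] ((Fin n → ℝ) × (Fin n → ℝ)) →ₗ[ℝ]
      ((Fin n → ℝ) × (Fin n → ℝ)) →ₗ[ℝ] ((Fin n → ℝ) × (Fin n → ℝ)))
    (hK1 : ∀ i j k, K (del i) (del j) (del k) =
      (c / A) • (Gm j k • del i - Gm i k • del j))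
    (hK2 : ∀ i j k, K (del i) (del j) (par k) =
      (c / A) • ((if k = j then (1 : ℝ) else 0) • ∑ h, Gm h i • par h -
        (if k = i then (1 : ℝ) else 0) • ∑ h, Gm h j • par h))
    (hK3 : ∀ i j k, K (par i) (par j) (del k) =
      (c / A) • ((if j = k then (1 : ℝ) else 0) • ∑ h, Hm h i • del h -
        (if i = k then (1 : ℝ) else 0) • ∑ h, Hm h j • del h))
    (hK4 : ∀ i j k, K (par i) (par j) (par k) =
      (c / A) • (Hm j k • par i - Hm i k • par j))
    (hK5 : ∀ i j k, K (par i) (del j) (del k) =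
      (c / A) • ((if i = j then (1 : ℝ) else 0) • ∑ h, Gm h k • par h))
    (hK6 : ∀ i j k, K (par i) (del j) (par k) =
      -((c / A) • ((if i = j then (1 : ℝ) else 0) • ∑ h, Hm h k • del h)))
    (hKalt : ∀ X Y, K X Y = -K Y X)
    (Ric : ((Fin n → ℝ) × (Fin n → ℝ)) → ((Fin n → ℝ) × (Fin n → ℝ)) → ℝ)
    (hRic : ∀ Y Z, Ric Y Z =
      LinearMap.trace ℝ _ ((K.flip Y).flip Z))
    (Gmet : ((Fin n → ℝ) × (Fin n → ℝ)) → ((Fin n → ℝ) × (Fin n → ℝ)) → ℝ)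
    (hGmet : ∀ u u', Gmet u u' =
      u.1 ⬝ᵥ Gm.mulVec u'.1 + u.2 ⬝ᵥ Hm.mulVec u'.2) :
    ∀ Y Z, Ric Y Z = (c * n / A) * Gmet Y Z := by
  classical
  -- derived curvature identities
  have hK5' : ∀ i j k, K (del i) (par j) (del k) =
      -((c / A) • ((if j = i then (1 : ℝ) else 0) • ∑ h, Gm h k • par h)) := by
    intro i j k
    rw [hKalt (del i) (par j)]
    simp [hK5 j i k]
  have hK6' : ∀ i j k, K (del i) (par j) (par k) =
      (c / A) • ((if j = i then (1 : ℝ) else 0) • ∑ h, Hm h k • del h) := by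
    intro i j k
    rw [hKalt (del i) (par j)]
    simp [hK6 j i k]
  -- bundle both sides as bilinear maps
  let B : ((Fin n → ℝ) × (Fin n → ℝ)) →ₗ[ℝ] ((Fin n → ℝ) × (Fin n → ℝ)) →ₗ[ℝ] ℝ :=
    (LinearMap.lflip.comp K.flip).compr₂ (LinearMap.trace ℝ ((Fin n → ℝ) × (Fin n → ℝ)))
  let Gb : ((Fin n → ℝ) × (Fin n → ℝ)) →ₗ[ℝ] ((Fin n → ℝ) × (Fin n → ℝ)) →ₗ[ℝ] ℝ :=
    LinearMap.mk₂ ℝ (fun u v => (c * n / A) * (u.1 ⬝ᵥ Gm.mulVec v.1 + u.2 ⬝ᵥ Hm.mulVec v.2))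
      (by intro m m' v
          simp [add_dotProduct, Prod.fst_add, Prod.snd_add]; ring)
      (by intro r m v
          simp [smul_dotProduct, Prod.smul_fst, Prod.smul_snd, smul_eq_mul]; ring)
      (by intro m v v'
          simp [Matrix.mulVec_add, dotProduct_add, Prod.fst_add, Prod.snd_add]; ring)
      (by intro r m v
          simp [Matrix.mulVec_smul, dotProduct_smul, Prod.smul_fst, Prod.smul_snd,
            smul_eq_mul]; ring)
  let b := (Pi.basisFun ℝ (Fin n)).prod (Pi.basisFun ℝ (Fin n))
  have hbl : ∀ i, b (Sum.inl i) = del i := by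
    intro i
    refine Prod.ext ?_ ?_ <;>
      simp [b, Module.Basis.prod_apply_inl_fst, Module.Basis.prod_apply_inl_snd, hdel, Pi.basisFun_apply]
  have hbr : ∀ i, b (Sum.inr i) = par i := by
    intro i
    refine Prod.ext ?_ ?_ <;>
      simp [b, Module.Basis.prod_apply_inr_fst, Module.Basis.prod_apply_inr_snd, hpar, Pi.basisFun_apply]
  have h1 : ∀ i : Fin n, (Pi.single i 1, (0 : Fin n → ℝ)) = del i := fun i => (hdel i).symm
  have h2 : ∀ i : Fin n, ((0 : Fin n → ℝ), Pi.single i 1) = par i := fun i => (hpar i).symm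
  have key : B = Gb := by
    apply b.ext; intro s; apply b.ext; intro t
    have hBapp : ∀ Y Z : (Fin n → ℝ) × (Fin n → ℝ),
        B Y Z = LinearMap.trace ℝ ((Fin n → ℝ) × (Fin n → ℝ)) ((K.flip Y).flip Z) := by
      intro Y Z; rfl
    rcases s with j | j <;> rcases t with k | k
    · -- del, del
      rw [hbl, hbl, hBapp, trace_prod_aux]
      simp only [LinearMap.flip_apply, h1, h2, hK1, hK5]
      simp [Gb, hdel, hpar, Prod.fst_sum, Prod.snd_sum, Finset.sum_apply, Pi.single_apply,
        mul_sub, Finset.sum_sub_distrib, apply_ite Prod.snd, apply_ite Prod.fst, ite_apply,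
        Finset.sum_ite_eq, Finset.sum_ite_eq', mul_ite, ite_mul, Finset.mul_sum, smul_eq_mul,
        dotProduct, Matrix.mulVec]
      ring
    · -- del, par
      rw [hbl, hbr, hBapp, trace_prod_aux]
      simp only [LinearMap.flip_apply, h1, h2, hK2, hK6]
      simp [Gb, hdel, hpar, Prod.fst_sum, Prod.snd_sum, Finset.sum_apply, Pi.single_apply,
        mul_sub, Finset.sum_sub_distrib, apply_ite Prod.snd, apply_ite Prod.fst, ite_apply,
        Finset.sum_ite_eq, Finset.sum_ite_eq', mul_ite, ite_mul, Finset.mul_sum, smul_eq_mul,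
        dotProduct, Matrix.mulVec]
    · -- par, del
      rw [hbr, hbl, hBapp, trace_prod_aux]
      simp only [LinearMap.flip_apply, h1, h2, hK5', hK3]
      simp [Gb, hdel, hpar, Prod.fst_sum, Prod.snd_sum, Finset.sum_apply, Pi.single_apply,
        mul_sub, Finset.sum_sub_distrib, apply_ite Prod.snd, apply_ite Prod.fst, ite_apply,
        Finset.sum_ite_eq, Finset.sum_ite_eq', mul_ite, ite_mul, Finset.mul_sum, smul_eq_mul,
        dotProduct, Matrix.mulVec]
    · -- par, par
      rw [hbr, hbr, hBapp, trace_prod_aux]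
      simp only [LinearMap.flip_apply, h1, h2, hK6', hK4]
      simp [Gb, hdel, hpar, Prod.fst_sum, Prod.snd_sum, Finset.sum_apply, Pi.single_apply,
        mul_sub, Finset.sum_sub_distrib, apply_ite Prod.snd, apply_ite Prod.fst, ite_apply,
        Finset.sum_ite_eq, Finset.sum_ite_eq', mul_ite, ite_mul, Finset.mul_sum, smul_eq_mul,
        dotProduct, Matrix.mulVec]
      ring
  intro Y Z
  have : B Y Z = Gb Y Z := by rw [key]
  rw [hRic, hGmet]
  simpa [B, Gb] using this
end

section
/- With K defined blockwise as in (17), K satisfies the first Bianchi identity: K(X,Y)Z + K(Y,Z)X + K(Z,X)Y = 0 for all X, Y, Z in the span of the adapted frame. -/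
open Matrix

/-- for the algebraic curvature operator `K` of equation (17),
`K` satisfies the first Bianchi identity. -/
theorem stmt13 {n : ℕ} (Gm : Matrix (Fin n) (Fin n) ℝ) (hGm : Gm.PosDef)
    (Hm : Matrix (Fin n) (Fin n) ℝ) (hHm : Hm = Gm⁻¹)
    (c A : ℝ) (hA : A > 0)
    (del par : Fin n → (Fin n → ℝ) × (Fin n → ℝ))
    (hdel : ∀ i, del i = (Pi.single i 1, 0))
    (hpar : ∀ i, par i = (0, Pi.single i 1))
    (K : ((Fin n → ℝ) × (Fin n → ℝ)) →ₗ[ℝ] ((Fin n → ℝ) × (Fin n → ℝ)) →ₗ[ℝ]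
      ((Fin n → ℝ) × (Fin n → ℝ)) →ₗ[ℝ] ((Fin n → ℝ) × (Fin n → ℝ)))
    (hK1 : ∀ i j k, K (del i) (del j) (del k) =
      (c / A) • (Gm j k • del i - Gm i k • del j))
    (hK2 : ∀ i j k, K (del i) (del j) (par k) =
      (c / A) • ((if k = j then (1 : ℝ) else 0) • ∑ h, Gm h i • par h -
        (if k = i then (1 : ℝ) else 0) • ∑ h, Gm h j • par h))
    (hK3 : ∀ i j k, K (par i) (par j) (del k) =
      (c / A) • ((if j = k then (1 : ℝ) else 0) • ∑ h, Hm h i • del h -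
        (if i = k then (1 : ℝ) else 0) • ∑ h, Hm h j • del h))
    (hK4 : ∀ i j k, K (par i) (par j) (par k) =
      (c / A) • (Hm j k • par i - Hm i k • par j))
    (hK5 : ∀ i j k, K (par i) (del j) (del k) =
      (c / A) • ((if i = j then (1 : ℝ) else 0) • ∑ h, Gm h k • par h))
    (hK6 : ∀ i j k, K (par i) (del j) (par k) =
      -((c / A) • ((if i = j then (1 : ℝ) else 0) • ∑ h, Hm h k • del h)))
    (hKalt : ∀ X Y, K X Y = -K Y X) :
    ∀ X Y Z, K X Y Z + K Y Z X + K Z X Y = 0 := by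
  classical
  have hGsym : ∀ a b, Gm a b = Gm b a := fun a b => by
    have := hGm.isHermitian.apply b a; simpa using this
  have hHherm : Hm.IsHermitian := hHm ▸ hGm.isHermitian.inv
  have hHsym : ∀ a b, Hm a b = Hm b a := fun a b => by
    have := hHherm.apply b a; simpa using this
  -- the four basic Bianchi computations on basis vectors
  have Bddd : ∀ i j k, K (del i) (del j) (del k) + K (del j) (del k) (del i) +
      K (del k) (del i) (del j) = 0 := by
    intro i j k
    rw [hK1 i j k, hK1 j k i, hK1 k i j, hGsym k i, hGsym k j, hGsym j i]
    module
  have Bddp : ∀ i j k, K (del i) (del j) (par k) + K (del j) (par k) (del i) +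
      K (par k) (del i) (del j) = 0 := by
    intro i j k
    rw [hK2 i j k, hKalt (del j) (par k)]
    simp only [LinearMap.neg_apply]
    rw [hK5 k j i, hK5 k i j]
    module
  have Bdpp : ∀ i j k, K (del i) (par j) (par k) + K (par j) (par k) (del i) +
      K (par k) (del i) (par j) = 0 := by
    intro i j k
    rw [hKalt (del i) (par j)]
    simp only [LinearMap.neg_apply]
    rw [hK6 j i k, hK3 j k i, hK6 k i j]
    module
  have Bppp : ∀ i j k, K (par i) (par j) (par k) + K (par j) (par k) (par i) +
      K (par k) (par i) (par j) = 0 := by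
    intro i j k
    rw [hK4 i j k, hK4 j k i, hK4 k i j, hHsym k i, hHsym k j, hHsym j i]
    module
  -- bundle the cyclic sum as a trilinear map
  let bV := (Pi.basisFun ℝ (Fin n)).prod (Pi.basisFun ℝ (Fin n))
  let cyc := fun (M : ((Fin n → ℝ) × (Fin n → ℝ)) →ₗ[ℝ] ((Fin n → ℝ) × (Fin n → ℝ)) →ₗ[ℝ]
      ((Fin n → ℝ) × (Fin n → ℝ)) →ₗ[ℝ] ((Fin n → ℝ) × (Fin n → ℝ))) =>
    LinearMap.lflip.toLinearMap ∘ₗ M.flip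
  let T := K + cyc (cyc K) + cyc K
  have hT : ∀ X Y Z, T X Y Z = K X Y Z + K Y Z X + K Z X Y := fun X Y Z => rfl
  have hbl : ∀ i, bV (Sum.inl i) = del i := by
    intro i
    rw [hdel]
    ext x <;> simp [bV]
  have hbr : ∀ i, bV (Sum.inr i) = par i := by
    intro i
    rw [hpar]
    ext x <;> simp [bV]
  have hzero : T = 0 := by
    refine bV.ext fun a => ?_
    rw [LinearMap.zero_apply]
    refine bV.ext fun b => ?_
    rw [LinearMap.zero_apply]
    refine bV.ext fun e => ?_
    rw [LinearMap.zero_apply]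
    rcases a with i | i <;> rcases b with j | j <;> rcases e with k | k <;>
        simp only [hbl, hbr] <;> rw [hT]
    · exact Bddd i j k
    · exact Bddp i j k
    · rw [← add_rotate]; exact Bddp k i j
    · exact Bdpp i j k
    · rw [add_rotate]; exact Bddp j k i
    · rw [add_rotate]; exact Bdpp j k i
    · rw [← add_rotate]; exact Bdpp k i j
    · exact Bppp i j k
  intro X Y Z
  rw [← hT X Y Z, hzero, LinearMap.zero_apply, LinearMap.zero_apply, LinearMap.zero_apply]
end
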